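/- Let u,v be vertices with d_G(u,v) ≥ 2 and let L be a 2-hop path cover labelling. Then the edge set of the shortest path graph G_uv equals the union, over all landmarks r with (r,δ_ur) ∈ L(u), (r,δ_vr) ∈ L(v), r ∉ {u,v}, and δ_ur + δ_vr = d_G(u,v), of the edge sets E(G_ur) ∪ E(G_rv). -/
import Mathlib

open SimpleGraph

variable {V : Type}

/-- The edge `e` lies on some shortest `u`-`v` path in `G`
(i.e. `e` is an edge of the shortest path graph `G_uv`). -/
def onSPedge (G : SimpleGraph V) (u v : V) (e : Sym2 V) : Prop :=
  ∃ w : G.Walk u v, w.length = G.dist u v ∧ e ∈ w.edges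

/-- The vertex `x` lies on some shortest `u`-`v` path in `G`
(i.e. `x` is a vertex of the shortest path graph `G_uv`). -/
def onSPvert (G : SimpleGraph V) (u v x : V) : Prop :=
  ∃ w : G.Walk u v, w.length = G.dist u v ∧ x ∈ w.support

/-- A labelling is valid if every entry records the true graph distance. -/
def ValidLab (G : SimpleGraph V) (L : V → Set (V × ℕ)) : Prop :=
  ∀ v r δ, (r, δ) ∈ L v → δ = G.dist v r

/-- `L` is a 2-hop distance cover: for all `u v`, `d_G(u,v)` is the minimum of
`δ_ur + δ_vr` over common landmarks `r`. -/
def TwoHopDistCover (G : SimpleGraph V) (L : V → Set (V × ℕ)) : Prop :=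
  ∀ u v : V,
    IsLeast {d : ℕ | ∃ r δu δv, (r, δu) ∈ L u ∧ (r, δv) ∈ L v ∧ d = δu + δv}
      (G.dist u v)

/-- `L` is a 2-hop path cover: a 2-hop distance cover such that for every
shortest path `p` between `u` and `v` with more than one edge, `d_G(u,v)` is the
minimum of `δ_ur + δ_vr` over common landmarks `r` lying on `p` other than `u, v`. -/
def TwoHopPathCover (G : SimpleGraph V) (L : V → Set (V × ℕ)) : Prop :=
  TwoHopDistCover G L ∧
  ∀ (u v : V) (p : G.Walk u v), p.IsPath → p.length = G.dist u v → 2 ≤ p.length →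
    IsLeast {d : ℕ | ∃ r δu δv, (r, δu) ∈ L u ∧ (r, δv) ∈ L v ∧
      r ∈ p.support ∧ r ≠ u ∧ r ≠ v ∧ d = δu + δv} (G.dist u v)

/-- for a valid 2-hop path cover `L` and vertices `u, v` with
`d_G(u,v) ≥ 2`, the edge set of `G_uv` equals the union of `E(G_ur) ∪ E(G_rv)`
over landmarks `r ∉ {u,v}` in both labels with `δ_ur + δ_vr = d_G(u,v)`. -/
theorem spg_edges_eq_union_over_cover (G : SimpleGraph V) (hG : G.Connected)
    (L : V → Set (V × ℕ)) (hL : ValidLab G L) (hC : TwoHopPathCover G L)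
    (u v : V) (hd : 2 ≤ G.dist u v) :
    ∀ e : Sym2 V,
      onSPedge G u v e ↔
      ∃ r δu δv, (r, δu) ∈ L u ∧ (r, δv) ∈ L v ∧ r ≠ u ∧ r ≠ v ∧
        δu + δv = G.dist u v ∧ (onSPedge G u r e ∨ onSPedge G r v e) := by
  intro e
  classical
  constructor
  · rintro ⟨w, hwlen, hwe⟩
    have hpath : w.IsPath := w.isPath_of_length_eq_dist hwlen
    have hlen2 : 2 ≤ w.length := hwlen ▸ hd
    obtain ⟨r, δu, δv, hru, hrv, hrs, hrnu, hrnv, hsum⟩ :=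
      (hC.2 u v w hpath hwlen hlen2).1
    have hδu : δu = G.dist u r := hL u r δu hru
    have hδv : δv = G.dist v r := hL v r δv hrv
    refine ⟨r, δu, δv, hru, hrv, hrnu, hrnv, hsum.symm, ?_⟩
    set w1 := w.takeUntil r hrs with hw1
    set w2 := w.dropUntil r hrs with hw2
    have hspec : w1.append w2 = w := w.take_spec hrs
    have hsumlen : w1.length + w2.length = G.dist u v := by
      rw [← Walk.length_append, hspec, hwlen]
    have h1 : G.dist u r ≤ w1.length := SimpleGraph.dist_le w1
    have h2 : G.dist r v ≤ w2.length := SimpleGraph.dist_le w2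
    have hcomm : G.dist v r = G.dist r v := SimpleGraph.dist_comm ..
    have h1' : w1.length = G.dist u r := by omega
    have h2' : w2.length = G.dist r v := by omega
    have he : e ∈ w1.edges ∨ e ∈ w2.edges := by
      rw [← List.mem_append, ← Walk.edges_append, hspec]; exact hwe
    rcases he with he | he
    · exact Or.inl ⟨w1, h1', he⟩
    · exact Or.inr ⟨w2, h2', he⟩
  · rintro ⟨r, δu, δv, hru, hrv, hrnu, hrnv, hsum, he⟩
    have hδu : δu = G.dist u r := hL u r δu hru
    have hδv : δv = G.dist v r := hL v r δv hrv
    have hcomm : G.dist v r = G.dist r v := SimpleGraph.dist_comm ..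
    rcases he with ⟨w1, hw1, he⟩ | ⟨w2, hw2, he⟩
    · obtain ⟨w2, hw2⟩ := hG.exists_walk_length_eq_dist r v
      refine ⟨w1.append w2, ?_, ?_⟩
      · rw [Walk.length_append, hw1, hw2]; omega
      · rw [Walk.edges_append, List.mem_append]; exact Or.inl he
    · obtain ⟨w1, hw1⟩ := hG.exists_walk_length_eq_dist u r
      refine ⟨w1.append w2, ?_, ?_⟩
      · rw [Walk.length_append, hw1, hw2]; omega
      · rw [Walk.edges_append, List.mem_append]; exact Or.inr he
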